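/- Let the interior angle of the wedge ∠A'KA with A = (1,0), A' = (-1,0), K = (0,-1/2) and the interior angle of the wedge ∠D'GD with D = (c, (c+1)/2), D' = (-c, (c+1)/2), G = (0,1/2), where c = (2+√2)/(3+√2), sum to 360°. -/

import Mathlib

noncomputable def c : ℝ := (2 + Real.sqrt 2) / (3 + Real.sqrt 2)

def v2 (x y : ℝ) : EuclideanSpace ℝ (Fin 2) := !₂[x, y]

open Real in
lemma arccos_key : Real.arccos (-(3/5)) = π - 2 * arctan (1/2) := by
  have ht0 : (0:ℝ) < arctan (1/2) := by
    have := arctan_strictMono (show (0:ℝ) < 1/2 by norm_num)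
    rwa [arctan_zero] at this
  have ht : arctan (1/2) < π/2 := arctan_lt_pi_div_two _
  have hc : Real.cos (π - 2 * arctan (1/2)) = -(3/5) := by
    rw [Real.cos_pi_sub, Real.cos_two_mul, Real.cos_arctan]
    have h5 : Real.sqrt (1 + (1/2:ℝ)^2) ^ 2 = 5/4 := by
      rw [Real.sq_sqrt] <;> norm_num
    have h5pos : Real.sqrt (1 + (1/2:ℝ)^2) > 0 := Real.sqrt_pos.2 (by norm_num)
    field_simp
    nlinarith [h5]
  rw [← hc, Real.arccos_cos (by linarith) (by linarith)]

open Real RealInnerProductSpace in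
lemma wedge (a : ℝ) (ha : 0 < a) :
    InnerProductGeometry.angle (v2 (-a) (a/2)) (v2 a (a/2)) = π - 2 * arctan (1/2) := by
  rw [InnerProductGeometry.angle]
  have hinner : ⟪v2 (-a) (a/2), v2 a (a/2)⟫ = -(3/4) * a^2 := by
    simp [v2, PiLp.inner_apply, Fin.sum_univ_two]
    ring
  have hnorm1 : ‖v2 (-a) (a/2)‖ = Real.sqrt (5/4) * a := by
    rw [v2, EuclideanSpace.norm_eq]
    simp only [Fin.sum_univ_two, Matrix.cons_val_zero, Matrix.cons_val_one, Matrix.head_cons,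
      Real.norm_eq_abs, sq_abs]
    rw [show (-a)^2 + (a/2)^2 = (5/4) * a^2 by ring, Real.sqrt_mul (by norm_num),
      Real.sqrt_sq ha.le]
  have hnorm2 : ‖v2 a (a/2)‖ = Real.sqrt (5/4) * a := by
    rw [v2, EuclideanSpace.norm_eq]
    simp only [Fin.sum_univ_two, Matrix.cons_val_zero, Matrix.cons_val_one, Matrix.head_cons,
      Real.norm_eq_abs, sq_abs]
    rw [show a^2 + (a/2)^2 = (5/4) * a^2 by ring, Real.sqrt_mul (by norm_num),
      Real.sqrt_sq ha.le]
  rw [hinner, hnorm1, hnorm2]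
  have h5 : Real.sqrt (5/4) ^ 2 = 5/4 := Real.sq_sqrt (by norm_num)
  have h5pos : Real.sqrt (5/4) > 0 := Real.sqrt_pos.2 (by norm_num)
  have hprod : Real.sqrt (5/4) * a * (Real.sqrt (5/4) * a) = 5/4 * a^2 := by nlinarith [h5]
  have : -(3/4) * a^2 / (Real.sqrt (5/4) * a * (Real.sqrt (5/4) * a)) = -(3/5) := by
    rw [hprod, div_eq_iff (by positivity : (5/4*a^2:ℝ) ≠ 0)]
    ring
  rw [this, arccos_key]

lemma vsub_v2 (x y x' y' : ℝ) : (v2 x y) -ᵥ (v2 x' y') = v2 (x - x') (y - y') := by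
  ext i
  fin_cases i <;> rfl

open EuclideanGeometry Real in
theorem wedge_angles_sum (A A' K D D' G : EuclideanSpace ℝ (Fin 2))
    (hA : A = !₂[1, 0]) (hA' : A' = !₂[-1, 0]) (hK : K = !₂[0, -1/2])
    (hD : D = !₂[c, (c + 1) / 2]) (hD' : D' = !₂[-c, (c + 1) / 2]) (hG : G = !₂[0, 1/2]) :
    ∠ A' K A = π - 2 * arctan (1 / 2) ∧
    2 * π - ∠ D' G D = π + 2 * arctan (1 / 2) ∧
    ∠ A' K A + (2 * π - ∠ D' G D) = 2 * π := by
  have hc : 0 < c := by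
    unfold c
    positivity
  have h1 : ∠ A' K A = π - 2 * arctan (1/2) := by
    rw [EuclideanGeometry.angle, hA, hA', hK,
      show (!₂[(-1:ℝ), 0] : EuclideanSpace ℝ (Fin 2)) = v2 (-1) 0 from rfl,
      show (!₂[(1:ℝ), 0] : EuclideanSpace ℝ (Fin 2)) = v2 1 0 from rfl,
      show (!₂[(0:ℝ), -1/2] : EuclideanSpace ℝ (Fin 2)) = v2 0 (-1/2) from rfl,
      vsub_v2, vsub_v2]
    have := wedge 1 one_pos
    norm_num at this ⊢
    convert this using 3
  have h2 : ∠ D' G D = π - 2 * arctan (1/2) := by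
    rw [EuclideanGeometry.angle, hD, hD', hG,
      show (!₂[-c, (c+1)/2] : EuclideanSpace ℝ (Fin 2)) = v2 (-c) ((c+1)/2) from rfl,
      show (!₂[c, (c+1)/2] : EuclideanSpace ℝ (Fin 2)) = v2 c ((c+1)/2) from rfl,
      show (!₂[(0:ℝ), 1/2] : EuclideanSpace ℝ (Fin 2)) = v2 0 (1/2) from rfl,
      vsub_v2, vsub_v2]
    have := wedge c hc
    convert this using 3 <;> ring
  exact ⟨h1, by rw [h2]; ring, by rw [h1, h2]; ring⟩
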